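/- Let H^{(0)}, H^{(1)} be translationally invariant nearest-neighbor Hamiltonians on a chain of N sites with local dimension d, with unique ground states, ground energies E_0^{(j)} and gaps Δ^{(j)}. Define K on the chain with local dimension 2d by K = Σ_i K_{i,i+1} with K_{i,i+1} = (1/3)H^{(0)}_{i,i+1}⊗|00⟩⟨00|_{A_iA_{i+1}} + (1/3)H^{(1)}_{i,i+1}⊗|11⟩⟨11|_{A_iA_{i+1}} + I⊗(|01⟩⟨01|+|10⟩⟨10|)_{A_iA_{i+1}}. Then the ground state energy of K equals (1/3)·min_j E_0^{(j)}. -/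

import Mathlib

open Matrix

/-- Operator norm of a matrix, acting on the Euclidean space. -/
noncomputable def opNorm {n : Type*} [Fintype n] [DecidableEq n]
    (A : Matrix n n ℂ) : ℝ :=
  ‖Matrix.toEuclideanCLM (𝕜 := ℂ) A‖

/-- The nearest-neighbor term `h` acting on sites `i, i+1` of a chain of `N` sites with
local space `α` (identity elsewhere). -/
noncomputable def twoSite (N : ℕ) {α : Type*} [Fintype α] [DecidableEq α]
    (h : Matrix (α × α) (α × α) ℂ) (i : ℕ) (hi : i + 1 < N) :
    Matrix (Fin N → α) (Fin N → α) ℂ :=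
  Matrix.of fun x y =>
    if ∀ j : Fin N, j.val ≠ i → j.val ≠ i + 1 → x j = y j then
      h (x ⟨i, by omega⟩, x ⟨i + 1, hi⟩) (y ⟨i, by omega⟩, y ⟨i + 1, hi⟩)
    else 0

/-- The translationally invariant nearest-neighbor Hamiltonian `H = Σ_{i=0}^{N-2} h_{i,i+1}`. -/
noncomputable def chainH (N : ℕ) {α : Type*} [Fintype α] [DecidableEq α]
    (h : Matrix (α × α) (α × α) ℂ) : Matrix (Fin N → α) (Fin N → α) ℂ :=
  ∑ i : Fin (N - 1), twoSite N h i.val (by have := i.isLt; omega)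

/-- Energy `⟨φ|H|φ⟩` of a state `φ`. -/
noncomputable def energyR {n : Type*} [Fintype n] (H : Matrix n n ℂ) (φ : n → ℂ) : ℝ :=
  (star φ ⬝ᵥ H.mulVec φ).re

/-- The two-site interaction term of the combined Hamiltonian `K`:
`(1/3)h⁰⊗|00⟩⟨00| + (1/3)h¹⊗|11⟩⟨11| + I⊗(|01⟩⟨01|+|10⟩⟨10|)`, where each site carries an
ancilla qubit (local space `Fin d × Fin 2`). -/
noncomputable def Kterm (d : ℕ) (h0 h1 : Matrix (Fin d × Fin d) (Fin d × Fin d) ℂ) :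
    Matrix ((Fin d × Fin 2) × (Fin d × Fin 2)) ((Fin d × Fin 2) × (Fin d × Fin 2)) ℂ :=
  Matrix.of fun p q =>
    if p.1.2 = q.1.2 ∧ p.2.2 = q.2.2 then
      if p.1.2 = 0 ∧ p.2.2 = 0 then (1 / 3 : ℂ) * h0 (p.1.1, p.2.1) (q.1.1, q.2.1)
      else if p.1.2 = 1 ∧ p.2.2 = 1 then (1 / 3 : ℂ) * h1 (p.1.1, p.2.1) (q.1.1, q.2.1)
      else if p.1.1 = q.1.1 ∧ p.2.1 = q.2.1 then 1 else 0
    else 0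

set_option linter.unusedSectionVars false
set_option linter.unusedVariables false


-- quadratic form bound
lemma quad_abs_le {n : Type*} [Fintype n] [DecidableEq n] (A : Matrix n n ℂ) (x : n → ℂ) :
    ‖star x ⬝ᵥ A.mulVec x‖ ≤ opNorm A * ∑ i, ‖x i‖ ^ 2 := by
  classical
  set x' : EuclideanSpace ℂ n := (WithLp.equiv 2 _).symm x with hx'
  have h1 : star x ⬝ᵥ A.mulVec x = inner (𝕜 := ℂ) x' ((Matrix.toEuclideanCLM (𝕜 := ℂ) A) x') := by
    rw [EuclideanSpace.inner_eq_star_dotProduct]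
    simp [hx', Matrix.toLin'_apply, dotProduct, mulVec]
    exact Finset.sum_congr rfl fun _ _ => mul_comm _ _
  have h2 : ‖inner (𝕜 := ℂ) x' ((Matrix.toEuclideanCLM (𝕜 := ℂ) A) x')‖ ≤
      ‖x'‖ * (opNorm A * ‖x'‖) := by
    refine (norm_inner_le_norm _ _).trans ?_
    exact mul_le_mul_of_nonneg_left ((Matrix.toEuclideanCLM (𝕜 := ℂ) A).le_opNorm x') (norm_nonneg _)
  have h3 : ‖x'‖ ^ 2 = ∑ i, ‖x i‖ ^ 2 := by
    rw [EuclideanSpace.norm_eq]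
    rw [Real.sq_sqrt (by positivity)]
    rfl
  rw [h1]
  calc ‖inner (𝕜 := ℂ) x' ((Matrix.toEuclideanCLM (𝕜 := ℂ) A) x')‖ ≤ ‖x'‖ * (opNorm A * ‖x'‖) := h2
    _ = opNorm A * ‖x'‖ ^ 2 := by ring
    _ = opNorm A * ∑ i, ‖x i‖ ^ 2 := by rw [h3]

lemma energyR_sum {n : Type*} [Fintype n] {ι : Type*} (t : Finset ι)
    (A : ι → Matrix n n ℂ) (z : n → ℂ) :
    energyR (∑ i ∈ t, A i) z = ∑ i ∈ t, energyR (A i) z := by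
  classical
  induction t using Finset.induction_on with
  | empty => simp [energyR]
  | @insert _ _ hnotmem ih =>
    rw [Finset.sum_insert hnotmem, Finset.sum_insert hnotmem, ← ih]
    unfold energyR
    rw [Matrix.add_mulVec, dotProduct_add, Complex.add_re]

lemma energyR_smul' {n : Type*} [Fintype n] (c : ℝ) (A : Matrix n n ℂ) (z : n → ℂ) :
    energyR ((c : ℂ) • A) z = c * energyR A z := by
  unfold energyR
  rw [Matrix.smul_mulVec, dotProduct_smul, smul_eq_mul, Complex.re_ofReal_mul]

lemma energyR_one {n : Type*} [Fintype n] [DecidableEq n] (z : n → ℂ) :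
    energyR (1 : Matrix n n ℂ) z = ∑ x, ‖z x‖ ^ 2 := by
  unfold energyR
  rw [Matrix.one_mulVec]
  have : star z ⬝ᵥ z = ((∑ x, ‖z x‖ ^ 2 : ℝ) : ℂ) := by
    unfold dotProduct
    rw [Complex.ofReal_sum]
    refine Finset.sum_congr rfl fun x _ => ?_
    simp only [Pi.star_apply]
    rw [show ((‖z x‖ ^ 2 : ℝ) : ℂ) = star (z x) * z x by rw [Complex.ofReal_pow]; exact (RCLike.conj_mul (z x)).symm]
  rw [this, Complex.ofReal_re]

lemma exists_ground {n : Type*} [Fintype n] [DecidableEq n] [Nonempty n] (H : Matrix n n ℂ) :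
    ∃ μ : ℝ, IsLeast {r : ℝ | ∃ φ : n → ℂ, (∑ x, ‖φ x‖ ^ 2) = 1 ∧ r = energyR H φ} μ := by
  classical
  set S : Set (n → ℂ) := {φ | (∑ x, ‖φ x‖ ^ 2) = 1} with hS
  have hcont : Continuous fun φ : n → ℂ => energyR H φ := by
    unfold energyR dotProduct Matrix.mulVec dotProduct
    refine Complex.continuous_re.comp ?_
    refine continuous_finset_sum _ fun i _ => ?_
    exact ((continuous_star.comp (continuous_apply i)).mul
      (continuous_finset_sum _ fun j _ => (continuous_const.mul (continuous_apply j))))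
  have hncont : Continuous fun φ : n → ℂ => ∑ x, ‖φ x‖ ^ 2 :=
    continuous_finset_sum _ fun i _ => ((continuous_apply i).norm.pow 2)
  have hclosed : IsClosed S := isClosed_eq hncont continuous_const
  have hbdd : Bornology.IsBounded S := by
    refine Metric.isBounded_iff_subset_closedBall 0 |>.2 ⟨1, fun φ hφ => ?_⟩
    simp only [Metric.mem_closedBall, dist_zero_right]
    refine (pi_norm_le_iff_of_nonneg zero_le_one).2 fun i => ?_
    have h1 : ‖φ i‖ ^ 2 ≤ 1 := by
      rw [← hφ]
      exact Finset.single_le_sum (f := fun x => ‖φ x‖ ^ 2) (fun x _ => by positivity) (Finset.mem_univ i)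
    nlinarith [norm_nonneg (φ i)]
  have hcompact : IsCompact S := Metric.isCompact_of_isClosed_isBounded hclosed hbdd
  have hne : S.Nonempty := by
    refine ⟨fun x => if x = Classical.arbitrary n then 1 else 0, ?_⟩
    simp [hS, apply_ite, Finset.sum_ite_eq']
  obtain ⟨φ₀, hφ₀S, hmin⟩ := hcompact.exists_isMinOn hne hcont.continuousOn
  refine ⟨energyR H φ₀, ⟨φ₀, hφ₀S, rfl⟩, ?_⟩
  rintro r ⟨φ, hφ, rfl⟩
  exact hmin hφ

lemma energyR_smul {n : Type*} [Fintype n] (H : Matrix n n ℂ) (c : ℂ) (z : n → ℂ) :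
    energyR H (c • z) = ‖c‖ ^ 2 * energyR H z := by
  unfold energyR
  rw [mulVec_smul, star_smul, smul_dotProduct, dotProduct_smul, smul_eq_mul, smul_eq_mul,
    ← mul_assoc]
  rw [show (star c : ℂ) * c = ((‖c‖ ^ 2 : ℝ) : ℂ) by
    rw [Complex.ofReal_pow]; exact RCLike.conj_mul c]
  rw [Complex.re_ofReal_mul]

lemma ground_quad {n : Type*} [Fintype n] (H : Matrix n n ℂ) (μ : ℝ)
    (hμ : IsLeast {r : ℝ | ∃ φ : n → ℂ, (∑ x, ‖φ x‖ ^ 2) = 1 ∧ r = energyR H φ} μ)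
    (z : n → ℂ) : μ * (∑ x, ‖z x‖ ^ 2) ≤ energyR H z := by
  classical
  by_cases hz : z = 0
  · subst hz; simp [energyR]
  · have hpos : 0 < ∑ x, ‖z x‖ ^ 2 := by
      obtain ⟨x₀, hx₀⟩ := Function.ne_iff.1 hz
      have h0 : z x₀ ≠ 0 := hx₀
      refine Finset.sum_pos' (fun x _ => by positivity) ⟨x₀, Finset.mem_univ _, pow_pos (norm_pos_iff.2 h0) 2⟩
    obtain ⟨c, hcpos, hc2⟩ : ∃ c : ℝ, 0 < c ∧ c ^ 2 = ∑ x, ‖z x‖ ^ 2 :=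
      ⟨Real.sqrt _, Real.sqrt_pos.2 hpos, Real.sq_sqrt hpos.le⟩
    set φ : n → ℂ := ((c⁻¹ : ℝ) : ℂ) • z with hφ
    have hnc : ‖((c⁻¹ : ℝ) : ℂ)‖ = c⁻¹ := by
      rw [Complex.norm_real, Real.norm_eq_abs, abs_of_pos (by positivity)]
    have hφnorm : (∑ x, ‖φ x‖ ^ 2) = 1 := by
      simp only [hφ, Pi.smul_apply, norm_smul, mul_pow, ← Finset.mul_sum, hnc, ← hc2]
      field_simp
    have h1 : μ ≤ energyR H φ := hμ.2 ⟨φ, hφnorm, rfl⟩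
    have h2 : energyR H φ = (c⁻¹) ^ 2 * energyR H z := by
      rw [hφ, energyR_smul, hnc]
    rw [h2] at h1
    calc μ * (∑ x, ‖z x‖ ^ 2) = μ * c ^ 2 := by rw [hc2]
      _ ≤ ((c⁻¹) ^ 2 * energyR H z) * c ^ 2 := mul_le_mul_of_nonneg_right h1 (by positivity)
      _ = energyR H z := by field_simp


lemma quad_expand {m : Type*} [Fintype m] (A : Matrix m m ℂ) (f : m → ℂ) :
    star f ⬝ᵥ A.mulVec f = ∑ x, ∑ y, star (f x) * (A x y * f y) := by
  unfold dotProduct Matrix.mulVec dotProduct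
  simp only [Pi.star_apply, Finset.mul_sum]

section Window
variable {α : Type*} [Fintype α] [DecidableEq α]
variable (N s L : ℕ)

/-- index type outside the window [s, s+L) -/
def Rest (N s L : ℕ) : Type := {j : Fin N // j.val < s ∨ s + L ≤ j.val}

instance : Fintype (Rest N s L) := by unfold Rest; infer_instance
instance : DecidableEq (Rest N s L) := by unfold Rest; infer_instance
instance [Nonempty α] : Nonempty (Rest N s L → α) := ⟨fun _ => Classical.arbitrary α⟩

variable (hs : s + L ≤ N)

def glue (hs : s + L ≤ N) (v : Fin L → α) (r : Rest N s L → α) : Fin N → α :=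
  fun j => if h : s ≤ j.val ∧ j.val < s + L then v ⟨j.val - s, by omega⟩ else r ⟨j, by omega⟩

lemma glue_in' (v : Fin L → α) (r : Rest N s L → α) (j : Fin N)
    (hj : s ≤ j.val ∧ j.val < s + L) :
    glue N s L hs v r j = v ⟨j.val - s, by omega⟩ := dif_pos hj

lemma glue_in (v : Fin L → α) (r : Rest N s L → α) (i : Fin L) :
    glue N s L hs v r ⟨s + i.val, by have := i.isLt; omega⟩ = v i := by
  rw [glue_in' N s L hs v r _ ⟨Nat.le_add_right _ _, by have := i.isLt; simp only [Fin.val_mk]; omega⟩]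
  congr 1
  ext
  simp

lemma glue_out (v : Fin L → α) (r : Rest N s L → α) (j : Rest N s L) :
    glue N s L hs v r j.val = r j := by
  unfold glue
  rw [dif_neg (by rcases j.2 with h | h <;> omega)]
  exact congrArg r (Subtype.ext rfl)

def windowEquiv : (Fin L → α) × (Rest N s L → α) ≃ (Fin N → α) where
  toFun p := glue N s L hs p.1 p.2
  invFun x := (fun i => x ⟨s + i.val, by omega⟩, fun j => x j.val)
  left_inv p := by
    obtain ⟨v, r⟩ := p
    refine Prod.ext ?_ ?_
    · funext i; exact glue_in N s L hs v r i
    · funext j; exact glue_out N s L hs v r j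
  right_inv x := by
    funext j
    unfold glue
    dsimp only
    split
    · congr 1; ext; simp; omega
    · rfl

/-- embedding of a window-matrix into the N-chain -/
noncomputable def embedM (G : Matrix (Fin L → α) (Fin L → α) ℂ) :
    Matrix (Fin N → α) (Fin N → α) ℂ :=
  Matrix.of fun x y =>
    if ∀ j : Fin N, (j.val < s ∨ s + L ≤ j.val) → x j = y j then
      G (fun i => x ⟨s + i.val, by omega⟩) (fun i => y ⟨s + i.val, by omega⟩)
    else 0

lemma embedM_glue (G : Matrix (Fin L → α) (Fin L → α) ℂ)
    (v w : Fin L → α) (r r' : Rest N s L → α) :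
    embedM N s L hs G (glue N s L hs v r) (glue N s L hs w r')
      = if r = r' then G v w else 0 := by
  classical
  unfold embedM
  simp only [Matrix.of_apply]
  by_cases hr : r = r'
  · subst hr
    rw [if_pos, if_pos rfl]
    · congr 1 <;> funext i
      · exact glue_in N s L hs v r i
      · exact glue_in N s L hs w r i
    · intro j hj
      rw [glue_out N s L hs v r ⟨j, hj⟩, glue_out N s L hs w r ⟨j, hj⟩]
  · rw [if_neg, if_neg hr]
    intro hagree
    apply hr
    funext j
    have := hagree j.val j.2
    rwa [glue_out N s L hs v r j, glue_out N s L hs w r' j] at this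

lemma energy_embedM (G : Matrix (Fin L → α) (Fin L → α) ℂ) (Ψ : (Fin N → α) → ℂ) :
    star Ψ ⬝ᵥ (embedM N s L hs G).mulVec Ψ
      = ∑ r : Rest N s L → α,
          star (fun v => Ψ (glue N s L hs v r)) ⬝ᵥ G.mulVec (fun v => Ψ (glue N s L hs v r)) := by
  classical
  simp only [quad_expand]
  rw [← Equiv.sum_comp (windowEquiv N s L hs)
    (fun x => ∑ y, star (Ψ x) * (embedM N s L hs G x y * Ψ y))]
  rw [Fintype.sum_prod_type]
  rw [Finset.sum_comm]
  refine Finset.sum_congr rfl fun r _ => ?_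
  refine Finset.sum_congr rfl fun v _ => ?_
  have hW : ∀ p : (Fin L → α) × (Rest N s L → α),
      windowEquiv N s L hs p = glue N s L hs p.1 p.2 := fun _ => rfl
  rw [hW]
  rw [← Equiv.sum_comp (windowEquiv N s L hs)
    (fun y => star (Ψ (glue N s L hs v r)) * (embedM N s L hs G (glue N s L hs v r) y * Ψ y))]
  rw [Fintype.sum_prod_type]
  refine Finset.sum_congr rfl fun w _ => ?_
  rw [show (∑ r' : Rest N s L → α, star (Ψ (glue N s L hs v r)) *
      (embedM N s L hs G (glue N s L hs v r) (windowEquiv N s L hs (w, r')) * Ψ (windowEquiv N s L hs (w, r'))))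
    = ∑ r' : Rest N s L → α, star (Ψ (glue N s L hs v r)) *
      ((if r = r' then G v w else 0) * Ψ (glue N s L hs w r')) from
    Finset.sum_congr rfl fun r' _ => by rw [hW, embedM_glue]]
  rw [Finset.sum_eq_single r]
  · rw [if_pos rfl]
  · intro r' _ hr'
    rw [if_neg (fun hh => hr' hh.symm), zero_mul, mul_zero]
  · intro hmem; exact absurd (Finset.mem_univ r) hmem

lemma norm_slice (Ψ : (Fin N → α) → ℂ) :
    ∑ x, ‖Ψ x‖ ^ 2 = ∑ r : Rest N s L → α, ∑ v : Fin L → α, ‖Ψ (glue N s L hs v r)‖ ^ 2 := by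
  rw [← Equiv.sum_comp (windowEquiv N s L hs) (fun x => ‖Ψ x‖ ^ 2), Fintype.sum_prod_type,
    Finset.sum_comm]
  rfl

lemma embedM_twoSite (h : Matrix (α × α) (α × α) ℂ) (i : ℕ) (hi : i + 1 < L) :
    embedM N s L hs (twoSite L h i hi) = twoSite N h (s + i) (by omega) := by
  funext x y
  simp only [embedM, twoSite, Matrix.of_apply]
  by_cases hc : ∀ j : Fin N, j.val ≠ s + i → j.val ≠ (s + i) + 1 → x j = y j
  · rw [if_pos hc, if_pos (fun j hj => hc j (by omega) (by omega)),
      if_pos (show ∀ j : Fin L, j.val ≠ i → j.val ≠ i + 1 →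
          x ⟨s + j.val, by have := j.isLt; omega⟩ = y ⟨s + j.val, by have := j.isLt; omega⟩ from
        fun j hj1 hj2 => hc ⟨s + j.val, by have := j.isLt; omega⟩
          (by simp only [Fin.val_mk]; omega) (by simp only [Fin.val_mk]; omega))]
    rfl
  · rw [if_neg hc]
    push_neg at hc
    obtain ⟨j, hj1, hj2, hj3⟩ := hc
    by_cases hout : ∀ j : Fin N, (j.val < s ∨ s + L ≤ j.val) → x j = y j
    · rw [if_pos hout]
      have hjin : s ≤ j.val ∧ j.val < s + L := by
        by_contra hco
        exact hj3 (hout j (by omega))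
      rw [if_neg]
      intro hin
      apply hj3
      have h2 := hin ⟨j.val - s, by omega⟩ (by simp only [Fin.val_mk]; omega)
        (by simp only [Fin.val_mk]; omega)
      have h3 : (⟨s + (j.val - s), by omega⟩ : Fin N) = j := by ext; simp only [Fin.val_mk]; omega
      rwa [h3] at h2
    · rw [if_neg hout]

lemma embedM_sum {ι : Type*} (t : Finset ι) (G : ι → Matrix (Fin L → α) (Fin L → α) ℂ) :
    embedM N s L hs (∑ i ∈ t, G i) = ∑ i ∈ t, embedM N s L hs (G i) := by
  funext x y
  simp only [embedM, Matrix.of_apply, Matrix.sum_apply]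
  split
  · rfl
  · simp
end Window


section Chains
variable {α : Type*} [Fintype α] [DecidableEq α] [Nonempty α]

/-- ground energy of the length-ℓ chain -/
noncomputable def gE (h : Matrix (α × α) (α × α) ℂ) (ℓ : ℕ) : ℝ :=
  Classical.choose (exists_ground (chainH ℓ h))

lemma gE_isLeast (h : Matrix (α × α) (α × α) ℂ) (ℓ : ℕ) :
    IsLeast {r : ℝ | ∃ φ : (Fin ℓ → α) → ℂ, (∑ x, ‖φ x‖ ^ 2) = 1 ∧ r = energyR (chainH ℓ h) φ}
      (gE h ℓ) :=
  Classical.choose_spec (exists_ground (chainH ℓ h))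

/-- lower bound for a run of bonds in window [s, s+L) -/
lemma run_bound (N s L : ℕ) (hs : s + L ≤ N) (h : Matrix (α × α) (α × α) ℂ)
    (Ψ : (Fin N → α) → ℂ) :
    gE h L * (∑ x, ‖Ψ x‖ ^ 2) ≤
      ∑ i : Fin (L - 1), energyR (twoSite N h (s + i.val) (by have := i.isLt; omega)) Ψ := by
  have step1 : ∑ i : Fin (L - 1), energyR (twoSite N h (s + i.val) (by have := i.isLt; omega)) Ψ
      = energyR (embedM N s L hs (chainH L h)) Ψ := by
    rw [show embedM N s L hs (chainH L h)
        = ∑ i : Fin (L - 1), twoSite N h (s + i.val) (by have := i.isLt; omega) by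
      unfold chainH
      rw [embedM_sum]
      exact Finset.sum_congr rfl fun i _ => embedM_twoSite N s L hs h i.val (by have := i.isLt; omega)]
    rw [energyR_sum]
  rw [step1]
  have step2 : energyR (embedM N s L hs (chainH L h)) Ψ
      = ∑ r : Rest N s L → α, energyR (chainH L h) (fun v => Ψ (glue N s L hs v r)) := by
    unfold energyR
    rw [energy_embedM, Complex.re_sum]
  rw [step2, norm_slice N s L hs Ψ, Finset.mul_sum]
  exact Finset.sum_le_sum fun r _ => ground_quad _ _ (gE_isLeast h L) _

lemma twoSite_pair (h : Matrix (α × α) (α × α) ℂ) (x y : Fin 2 → α) :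
    twoSite 2 h 0 (by omega) x y = h (finTwoArrowEquiv α x) (finTwoArrowEquiv α y) := by
  simp only [twoSite, Matrix.of_apply, finTwoArrowEquiv, Equiv.coe_fn_mk]
  rw [if_pos (show ∀ j : Fin 2, j.val ≠ 0 → j.val ≠ 0 + 1 → x j = y j from
    fun j hj1 hj2 => absurd j.isLt (by omega))]
  rfl

lemma energyR_pairM (h : Matrix (α × α) (α × α) ℂ) (z : (Fin 2 → α) → ℂ) :
    star z ⬝ᵥ (twoSite 2 h 0 (by omega)).mulVec z
      = star (z ∘ (finTwoArrowEquiv α).symm) ⬝ᵥ h.mulVec (z ∘ (finTwoArrowEquiv α).symm) := by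
  rw [quad_expand, quad_expand]
  rw [← Equiv.sum_comp (finTwoArrowEquiv α).symm
    (fun x => ∑ y : Fin 2 → α, star (z x) * (twoSite 2 h 0 (by omega) x y * z y))]
  refine Finset.sum_congr rfl fun p _ => ?_
  rw [← Equiv.sum_comp (finTwoArrowEquiv α).symm
    (fun y => star (z ((finTwoArrowEquiv α).symm p)) *
      (twoSite 2 h 0 (by omega) ((finTwoArrowEquiv α).symm p) y * z y))]
  refine Finset.sum_congr rfl fun q _ => ?_
  rw [twoSite_pair]
  simp only [Function.comp_apply, Equiv.apply_symm_apply]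

/-- single-bond energy bound -/
lemma bond_bound (N i : ℕ) (hi : i + 1 < N) (h : Matrix (α × α) (α × α) ℂ)
    (Ψ : (Fin N → α) → ℂ) :
    |energyR (twoSite N h i hi) Ψ| ≤ opNorm h * (∑ x, ‖Ψ x‖ ^ 2) := by
  have hs : i + 2 ≤ N := by omega
  have hemb : twoSite N h i hi = embedM N i 2 hs (twoSite 2 h 0 (by omega)) :=
    (embedM_twoSite N i 2 hs h 0 (by omega)).symm
  rw [hemb]
  unfold energyR
  rw [energy_embedM, Complex.re_sum]
  calc |∑ r : Rest N i 2 → α,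
        (star (fun v => Ψ (glue N i 2 hs v r)) ⬝ᵥ
          (twoSite 2 h 0 (by omega)).mulVec (fun v => Ψ (glue N i 2 hs v r))).re|
      ≤ ∑ r : Rest N i 2 → α,
        |(star (fun v => Ψ (glue N i 2 hs v r)) ⬝ᵥ
          (twoSite 2 h 0 (by omega)).mulVec (fun v => Ψ (glue N i 2 hs v r))).re| :=
        Finset.abs_sum_le_sum_abs _ _
    _ ≤ ∑ r : Rest N i 2 → α, opNorm h * ∑ v : Fin 2 → α, ‖Ψ (glue N i 2 hs v r)‖ ^ 2 := by
        refine Finset.sum_le_sum fun r _ => ?_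
        rw [energyR_pairM]
        refine (Complex.abs_re_le_norm _).trans ?_
        refine (quad_abs_le h _).trans ?_
        refine mul_le_mul_of_nonneg_left ?_ (norm_nonneg _)
        rw [← Equiv.sum_comp (finTwoArrowEquiv α).symm
          (fun v => ‖Ψ (glue N i 2 hs v r)‖ ^ 2)]
        exact le_refl _
    _ = opNorm h * (∑ x, ‖Ψ x‖ ^ 2) := by rw [← Finset.mul_sum, ← norm_slice N i 2 hs Ψ]
end Chains
section Chains2
variable {α : Type*} [Fintype α] [DecidableEq α] [Nonempty α]

/-- energy of bond i (junk value 0 out of range) -/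
noncomputable def bondE (N : ℕ) (h : Matrix (α × α) (α × α) ℂ) (Ψ : (Fin N → α) → ℂ)
    (i : ℕ) : ℝ :=
  if hi : i + 1 < N then energyR (twoSite N h i hi) Ψ else 0

lemma bondE_eq (N : ℕ) (h : Matrix (α × α) (α × α) ℂ) (Ψ : (Fin N → α) → ℂ)
    (i : ℕ) (hi : i + 1 < N) : bondE N h Ψ i = energyR (twoSite N h i hi) Ψ := dif_pos hi

lemma window_energy (N s L : ℕ) (hs : s + L ≤ N) (h : Matrix (α × α) (α × α) ℂ)
    (Ψ : (Fin N → α) → ℂ) :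
    ∑ i ∈ Finset.Ico s (s + L - 1), bondE N h Ψ i
      = ∑ r : Rest N s L → α, energyR (chainH L h) (fun v => Ψ (glue N s L hs v r)) := by
  have e1 : ∑ i ∈ Finset.Ico s (s + L - 1), bondE N h Ψ i
      = ∑ i : Fin (L - 1), energyR (twoSite N h (s + i.val) (by have := i.isLt; omega)) Ψ := by
    rw [Finset.sum_Ico_eq_sum_range]
    rw [show s + L - 1 - s = L - 1 by omega]
    rw [← Fin.sum_univ_eq_sum_range (fun i => bondE N h Ψ (s + i)) (L - 1)]
    exact Finset.sum_congr rfl fun i _ => bondE_eq N h Ψ _ (by have := i.isLt; omega)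
  rw [e1]
  have step1 : ∑ i : Fin (L - 1), energyR (twoSite N h (s + i.val) (by have := i.isLt; omega)) Ψ
      = energyR (embedM N s L hs (chainH L h)) Ψ := by
    rw [show embedM N s L hs (chainH L h)
        = ∑ i : Fin (L - 1), twoSite N h (s + i.val) (by have := i.isLt; omega) by
      unfold chainH
      rw [embedM_sum]
      exact Finset.sum_congr rfl fun i _ => embedM_twoSite N s L hs h i.val (by have := i.isLt; omega)]
    rw [energyR_sum]
  rw [step1]
  unfold energyR
  rw [energy_embedM, Complex.re_sum]

lemma chain_energy (N : ℕ) (h : Matrix (α × α) (α × α) ℂ) (Ψ : (Fin N → α) → ℂ) :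
    energyR (chainH N h) Ψ = ∑ i ∈ Finset.range (N - 1), bondE N h Ψ i := by
  unfold chainH
  rw [energyR_sum]
  rw [← Fin.sum_univ_eq_sum_range (fun i => bondE N h Ψ i) (N - 1)]
  exact Finset.sum_congr rfl fun i _ => (bondE_eq N h Ψ _ (by have := i.isLt; omega)).symm

lemma run_bound_Ico (N s L : ℕ) (hs : s + L ≤ N) (h : Matrix (α × α) (α × α) ℂ)
    (Ψ : (Fin N → α) → ℂ) :
    gE h L * (∑ x, ‖Ψ x‖ ^ 2) ≤ ∑ i ∈ Finset.Ico s (s + L - 1), bondE N h Ψ i := by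
  rw [window_energy N s L hs h Ψ, norm_slice N s L hs Ψ, Finset.mul_sum]
  exact Finset.sum_le_sum fun r _ => ground_quad _ _ (gE_isLeast h L) _

lemma bondE_abs (N : ℕ) (h : Matrix (α × α) (α × α) ℂ) (Ψ : (Fin N → α) → ℂ) (i : ℕ)
    (hop : opNorm h ≤ 1) (hnn : 0 ≤ ∑ x, ‖Ψ x‖ ^ 2) :
    |bondE N h Ψ i| ≤ ∑ x, ‖Ψ x‖ ^ 2 := by
  unfold bondE
  split
  · next hi =>
      refine (bond_bound N i hi h Ψ).trans ?_
      calc opNorm h * (∑ x, ‖Ψ x‖ ^ 2) ≤ 1 * (∑ x, ‖Ψ x‖ ^ 2) :=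
            mul_le_mul_of_nonneg_right hop hnn
        _ = ∑ x, ‖Ψ x‖ ^ 2 := one_mul _
  · simpa using hnn
end Chains2
section Chains3
variable {α : Type*} [Fintype α] [DecidableEq α] [Nonempty α]

lemma sum_split (A B : ℕ) (hA : 1 ≤ A) (hB : 1 ≤ B) (f : ℕ → ℝ) :
    ∑ i ∈ Finset.range (A + B - 1), f i
      = (∑ i ∈ Finset.Ico 0 (A - 1), f i) + f (A - 1) + ∑ i ∈ Finset.Ico A (A + B - 1), f i := by
  have h1 := Finset.sum_Ico_consecutive f (Nat.zero_le (A - 1)) (show A - 1 ≤ A + B - 1 by omega)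
  have h2 := Finset.sum_eq_sum_Ico_succ_bot (show A - 1 < A + B - 1 by omega) f
  rw [Finset.range_eq_Ico, ← h1, h2, show A - 1 + 1 = A by omega]
  ring

def eLequiv (A B : ℕ) : Fin B ≃ Rest (A + B) 0 A where
  toFun i := ⟨⟨A + i.val, by have := i.isLt; omega⟩, Or.inr (by simp only [Fin.val_mk]; omega)⟩
  invFun j := ⟨j.1.val - A, by
    have hj : j.1.val < 0 ∨ 0 + A ≤ j.1.val := j.2
    have := j.1.isLt
    omega⟩
  left_inv i := by ext; simp only [Fin.val_mk]; omega
  right_inv j := by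
    have hj : j.1.val < 0 ∨ 0 + A ≤ j.1.val := j.2
    have := j.1.isLt
    apply Subtype.ext
    apply Fin.ext
    simp only [Fin.val_mk]
    omega

def eRequiv (A B : ℕ) : Fin A ≃ Rest (A + B) A B where
  toFun i := ⟨⟨i.val, by have := i.isLt; omega⟩, Or.inl (by simp only [Fin.val_mk]; exact i.isLt)⟩
  invFun j := ⟨j.1.val, by
    have hj : j.1.val < A ∨ A + B ≤ j.1.val := j.2
    have := j.1.isLt
    omega⟩
  left_inv i := by ext; simp only [Fin.val_mk]
  right_inv j := by
    apply Subtype.ext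
    apply Fin.ext
    simp only [Fin.val_mk]

def restFunEquivL (A B : ℕ) {α : Type*} : (Rest (A + B) 0 A → α) ≃ (Fin B → α) where
  toFun r := fun i => r (eLequiv A B i)
  invFun w := fun j => w ((eLequiv A B).symm j)
  left_inv r := by funext j; simp
  right_inv w := by funext i; simp

def restFunEquivR (A B : ℕ) {α : Type*} : (Rest (A + B) A B → α) ≃ (Fin A → α) where
  toFun r := fun i => r (eRequiv A B i)
  invFun w := fun j => w ((eRequiv A B).symm j)
  left_inv r := by funext j; simp
  right_inv w := by funext i; simp

lemma chain_super (h : Matrix (α × α) (α × α) ℂ) (hop : opNorm h ≤ 1)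
    (A B : ℕ) (hA : 1 ≤ A) (hB : 1 ≤ B) :
    gE h A + gE h B - 1 ≤ gE h (A + B) := by
  obtain ⟨Φ, hΦn, hΦE⟩ := (gE_isLeast h (A + B)).1
  rw [hΦE, chain_energy, sum_split A B hA hB]
  have h1 : gE h A ≤ ∑ i ∈ Finset.Ico 0 (A - 1), bondE (A + B) h Φ i := by
    have := run_bound_Ico (A + B) 0 A (by omega) h Φ
    rw [show (0 : ℕ) + A - 1 = A - 1 by omega, hΦn, mul_one] at this
    exact this
  have h2 : gE h B ≤ ∑ i ∈ Finset.Ico A (A + B - 1), bondE (A + B) h Φ i := by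
    have := run_bound_Ico (A + B) A B (by omega) h Φ
    rw [hΦn, mul_one] at this
    exact this
  have h3 : -1 ≤ bondE (A + B) h Φ (A - 1) := by
    have := bondE_abs (A + B) h Φ (A - 1) hop (by rw [hΦn]; norm_num)
    rw [hΦn] at this
    linarith [abs_le.1 this]
  linarith

lemma chain_subadd (h : Matrix (α × α) (α × α) ℂ) (hop : opNorm h ≤ 1)
    (A B : ℕ) (hA : 1 ≤ A) (hB : 1 ≤ B) :
    gE h (A + B) ≤ gE h A + gE h B + 1 := by
  obtain ⟨φ, hφn, hφE⟩ := (gE_isLeast h A).1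
  obtain ⟨ψ, hψn, hψE⟩ := (gE_isLeast h B).1
  set Φ : (Fin (A + B) → α) → ℂ :=
    fun x => φ (fun i => x ⟨i.val, by have := i.isLt; omega⟩)
      * ψ (fun i => x ⟨A + i.val, by have := i.isLt; omega⟩) with hΦ
  have hsL : 0 + A ≤ A + B := by omega
  have hsR : A + B ≤ A + B := le_refl _
  have sliceL : ∀ (r : Rest (A + B) 0 A → α) (v : Fin A → α),
      Φ (glue (A + B) 0 A hsL v r) = ψ (fun i => r (eLequiv A B i)) * φ v := by
    intro r v
    simp only [hΦ]
    have harg1 : (fun i : Fin A =>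
        glue (A + B) 0 A hsL v r ⟨i.val, by have := i.isLt; omega⟩) = v := by
      funext i
      rw [glue_in' (A + B) 0 A hsL v r _
        ⟨by omega, by simp only [Fin.val_mk]; have := i.isLt; omega⟩]
      congr 1
      all_goals (ext; simp only [Fin.val_mk]; omega)
    have harg2 : (fun i : Fin B =>
        glue (A + B) 0 A hsL v r ⟨A + i.val, by have := i.isLt; omega⟩)
        = fun i => r (eLequiv A B i) := by
      funext i
      show dite _ _ _ = _
      rw [dif_neg (by simp only [Fin.val_mk]; omega)]
      rfl
    rw [harg1, harg2, mul_comm]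
  have sliceR : ∀ (r : Rest (A + B) A B → α) (w : Fin B → α),
      Φ (glue (A + B) A B hsR w r) = φ (fun i => r (eRequiv A B i)) * ψ w := by
    intro r w
    simp only [hΦ]
    have harg1 : (fun i : Fin A =>
        glue (A + B) A B hsR w r ⟨i.val, by have := i.isLt; omega⟩)
        = fun i => r (eRequiv A B i) := by
      funext i
      show dite _ _ _ = _
      rw [dif_neg (by simp only [Fin.val_mk]; have := i.isLt; omega)]
      rfl
    have harg2 : (fun i : Fin B =>
        glue (A + B) A B hsR w r ⟨A + i.val, by have := i.isLt; omega⟩) = w := by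
      funext i
      rw [glue_in' (A + B) A B hsR w r _ ⟨by simp only [Fin.val_mk]; omega,
        by simp only [Fin.val_mk]; have := i.isLt; omega⟩]
      congr 1
      all_goals (ext; simp only [Fin.val_mk]; omega)
    rw [harg1, harg2]
  have sumL : ∀ F : (Fin B → α) → ℝ,
      (∑ r : Rest (A + B) 0 A → α, F (fun i => r (eLequiv A B i))) = ∑ w : Fin B → α, F w :=
    fun F => Equiv.sum_comp (restFunEquivL A B) F
  have sumR : ∀ F : (Fin A → α) → ℝ,
      (∑ r : Rest (A + B) A B → α, F (fun i => r (eRequiv A B i))) = ∑ v : Fin A → α, F v :=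
    fun F => Equiv.sum_comp (restFunEquivR A B) F
  have hΦnorm : (∑ x, ‖Φ x‖ ^ 2) = 1 := by
    rw [norm_slice (A + B) 0 A hsL Φ]
    have hr : ∀ r : Rest (A + B) 0 A → α,
        (∑ v : Fin A → α, ‖Φ (glue (A + B) 0 A hsL v r)‖ ^ 2)
          = ‖ψ (fun i => r (eLequiv A B i))‖ ^ 2 := by
      intro r
      have hv : ∀ v : Fin A → α, ‖Φ (glue (A + B) 0 A hsL v r)‖ ^ 2
          = ‖ψ (fun i => r (eLequiv A B i))‖ ^ 2 * ‖φ v‖ ^ 2 := by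
        intro v
        rw [sliceL r v, norm_mul, mul_pow]
      rw [Finset.sum_congr rfl fun v _ => hv v, ← Finset.mul_sum, hφn, mul_one]
    rw [Finset.sum_congr rfl fun r _ => hr r]
    rw [sumL (fun w => ‖ψ w‖ ^ 2), hψn]
  have eleft : ∑ i ∈ Finset.Ico 0 (A - 1), bondE (A + B) h Φ i = gE h A := by
    have hwe := window_energy (A + B) 0 A hsL h Φ
    rw [show (0 : ℕ) + A - 1 = A - 1 by omega] at hwe
    rw [hwe]
    have hr : ∀ r : Rest (A + B) 0 A → α,
        energyR (chainH A h) (fun v => Φ (glue (A + B) 0 A hsL v r))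
          = ‖ψ (fun i => r (eLequiv A B i))‖ ^ 2 * gE h A := by
      intro r
      have hfun : (fun v => Φ (glue (A + B) 0 A hsL v r))
          = (ψ (fun i => r (eLequiv A B i))) • φ := by
        funext v
        rw [sliceL r v]
        rfl
      rw [hfun, energyR_smul, ← hφE]
    rw [Finset.sum_congr rfl fun r _ => hr r]
    rw [← Finset.sum_mul, sumL (fun w => ‖ψ w‖ ^ 2), hψn, one_mul]
  have eright : ∑ i ∈ Finset.Ico A (A + B - 1), bondE (A + B) h Φ i = gE h B := by
    rw [window_energy (A + B) A B hsR h Φ]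
    have hr : ∀ r : Rest (A + B) A B → α,
        energyR (chainH B h) (fun w => Φ (glue (A + B) A B hsR w r))
          = ‖φ (fun i => r (eRequiv A B i))‖ ^ 2 * gE h B := by
      intro r
      have hfun : (fun w => Φ (glue (A + B) A B hsR w r))
          = (φ (fun i => r (eRequiv A B i))) • ψ := by
        funext w
        rw [sliceR r w]
        rfl
      rw [hfun, energyR_smul, ← hψE]
    rw [Finset.sum_congr rfl fun r _ => hr r]
    rw [← Finset.sum_mul, sumR (fun v => ‖φ v‖ ^ 2), hφn, one_mul]
  have emid : bondE (A + B) h Φ (A - 1) ≤ 1 := by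
    have := bondE_abs (A + B) h Φ (A - 1) hop (by rw [hΦnorm]; norm_num)
    rw [hΦnorm] at this
    linarith [abs_le.1 this]
  have hmem : gE h (A + B) ≤ energyR (chainH (A + B) h) Φ :=
    (gE_isLeast h (A + B)).2 ⟨Φ, hΦnorm, rfl⟩
  rw [chain_energy, sum_split A B hA hB, eleft, eright] at hmem
  linarith
end Chains3
section Chains4
variable {α : Type*} [Fintype α] [DecidableEq α] [Nonempty α]

lemma chain_super_iter (h : Matrix (α × α) (α × α) ℂ) (hop : opNorm h ≤ 1)
    (L : ℕ) (hL : 1 ≤ L) :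
    ∀ t : ℕ, 1 ≤ t → (t : ℝ) * gE h L - ((t : ℝ) - 1) ≤ gE h (t * L) := by
  intro t ht
  induction t, ht using Nat.le_induction with
  | base => simp [one_mul]
  | succ t ht ih =>
    have hsplit := chain_super h hop (t * L) L (Nat.one_le_iff_ne_zero.2 (Nat.mul_ne_zero (by omega) (by omega))) hL
    have : (t + 1) * L = t * L + L := by ring
    rw [this]
    push_cast
    nlinarith [hsplit, ih]

lemma chain_sub_iter (h : Matrix (α × α) (α × α) ℂ) (hop : opNorm h ≤ 1)
    (L : ℕ) (hL : 1 ≤ L) :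
    ∀ t : ℕ, 1 ≤ t → gE h (t * L) ≤ (t : ℝ) * gE h L + ((t : ℝ) - 1) := by
  intro t ht
  induction t, ht using Nat.le_induction with
  | base => simp [one_mul]
  | succ t ht ih =>
    have hsplit := chain_subadd h hop (t * L) L (Nat.one_le_iff_ne_zero.2 (Nat.mul_ne_zero (by omega) (by omega))) hL
    have : (t + 1) * L = t * L + L := by ring
    rw [this]
    push_cast
    nlinarith [hsplit, ih]

lemma gE_lower (h : Matrix (α × α) (α × α) ℂ) (hop : opNorm h ≤ 1)
    (N ℓ : ℕ) (hN : 1 ≤ N) (hℓ : 1 ≤ ℓ) :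
    ((ℓ : ℝ) * gE h N - (ℓ : ℝ) - (N : ℝ) + 2) / (N : ℝ) ≤ gE h ℓ := by
  have ha := chain_super_iter h hop N hN ℓ hℓ
  have hb := chain_sub_iter h hop ℓ hℓ N hN
  rw [show N * ℓ = ℓ * N by ring] at hb
  have hNpos : (0 : ℝ) < (N : ℝ) := by positivity
  rw [div_le_iff₀ hNpos]
  nlinarith [ha.trans hb]
end Chains4
section Sector
variable (N d : ℕ) (h0 h1 : Matrix (Fin d × Fin d) (Fin d × Fin d) ℂ)

noncomputable def sectorB (a : Fin N → Fin 2) (i : ℕ) (hi : i + 1 < N) :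
    Matrix (Fin N → Fin d) (Fin N → Fin d) ℂ :=
  if a ⟨i, by omega⟩ = 0 ∧ a ⟨i + 1, hi⟩ = 0 then (1 / 3 : ℂ) • twoSite N h0 i hi
  else if a ⟨i, by omega⟩ = 1 ∧ a ⟨i + 1, hi⟩ = 1 then (1 / 3 : ℂ) • twoSite N h1 i hi
  else 1

def pairF (v : Fin N → Fin d) (a : Fin N → Fin 2) : Fin N → Fin d × Fin 2 := fun j => (v j, a j)

def sectorEquiv : (Fin N → Fin d) × (Fin N → Fin 2) ≃ (Fin N → Fin d × Fin 2) where
  toFun p := pairF N d p.1 p.2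
  invFun x := (fun j => (x j).1, fun j => (x j).2)
  left_inv p := rfl
  right_inv x := rfl

lemma Kterm_twoSite_entry (i : ℕ) (hi : i + 1 < N) (v w : Fin N → Fin d)
    (a b : Fin N → Fin 2) :
    twoSite N (Kterm d h0 h1) i hi (pairF N d v a) (pairF N d w b)
      = if a = b then sectorB N d h0 h1 a i hi v w else 0 := by
  classical
  by_cases hab : a = b
  · subst hab
    rw [if_pos rfl]
    simp only [twoSite, Kterm, Matrix.of_apply, pairF]
    rw [if_congr (show (∀ j : Fin N, j.val ≠ i → j.val ≠ i + 1 → (v j, a j) = (w j, a j))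
        ↔ (∀ j : Fin N, j.val ≠ i → j.val ≠ i + 1 → v j = w j) by
      constructor
      · intro hc j h1 h2
        exact (Prod.mk.injEq _ _ _ _ ▸ (hc j h1 h2)).1
      · intro hc j h1 h2
        rw [hc j h1 h2]) rfl rfl]
    unfold sectorB
    by_cases hCd : ∀ j : Fin N, j.val ≠ i → j.val ≠ i + 1 → v j = w j
    · rw [if_pos hCd, if_pos (by constructor <;> trivial)]
      by_cases h00 : a ⟨i, by omega⟩ = 0 ∧ a ⟨i + 1, hi⟩ = 0
      · simp only [if_pos h00, Matrix.smul_apply, smul_eq_mul]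
        unfold twoSite
        rw [Matrix.of_apply, if_pos hCd]
        exact if_pos h00
      · simp only [if_neg h00]
        by_cases h11 : a ⟨i, by omega⟩ = 1 ∧ a ⟨i + 1, hi⟩ = 1
        · simp only [if_pos h11, Matrix.smul_apply, smul_eq_mul]
          unfold twoSite
          rw [Matrix.of_apply, if_pos hCd]
          exact (if_neg h00).trans (if_pos h11)
        · simp only [if_neg h11, Matrix.one_apply]
          by_cases hvw : v = w
          · subst hvw
            exact (if_neg h00).trans ((if_neg h11).trans ((if_pos (show v ⟨i, by omega⟩ = v ⟨i, by omega⟩ ∧ v ⟨i + 1, hi⟩ = v ⟨i + 1, hi⟩ from ⟨rfl, rfl⟩)).trans (if_pos rfl).symm))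
          · refine (if_neg h00).trans ((if_neg h11).trans ((if_neg ?_).trans (if_neg hvw).symm))
            intro hin
            apply hvw
            funext j
            by_cases hji : j.val = i
            · have hj : j = (⟨i, by omega⟩ : Fin N) := Fin.ext hji
              rw [hj]; exact hin.1
            · by_cases hji1 : j.val = i + 1
              · have hj : j = (⟨i + 1, hi⟩ : Fin N) := Fin.ext hji1
                rw [hj]; exact hin.2
              · exact hCd j hji hji1
    · rw [if_neg hCd]
      push_neg at hCd
      obtain ⟨j, hj1, hj2, hj3⟩ := hCd
      by_cases h00 : a ⟨i, by omega⟩ = 0 ∧ a ⟨i + 1, hi⟩ = 0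
      · rw [if_pos h00, Matrix.smul_apply, smul_eq_mul]
        unfold twoSite
        rw [Matrix.of_apply, if_neg (by push_neg; exact ⟨j, hj1, hj2, hj3⟩), mul_zero]
      · rw [if_neg h00]
        by_cases h11 : a ⟨i, by omega⟩ = 1 ∧ a ⟨i + 1, hi⟩ = 1
        · rw [if_pos h11, Matrix.smul_apply, smul_eq_mul]
          unfold twoSite
          rw [Matrix.of_apply, if_neg (by push_neg; exact ⟨j, hj1, hj2, hj3⟩), mul_zero]
        · rw [if_neg h11, Matrix.one_apply_ne (fun hvw => hj3 (by rw [hvw]))]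
  · rw [if_neg hab]
    simp only [twoSite, Kterm, Matrix.of_apply, pairF]
    by_cases hc : ∀ j : Fin N, j.val ≠ i → j.val ≠ i + 1 → (v j, a j) = (w j, b j)
    · refine (if_pos hc).trans (if_neg ?_)
      intro hmatch
      apply hab
      funext j
      by_cases hji : j.val = i
      · have hj : j = (⟨i, by omega⟩ : Fin N) := Fin.ext hji
        rw [hj]; exact hmatch.1
      · by_cases hji1 : j.val = i + 1
        · have hj : j = (⟨i + 1, hi⟩ : Fin N) := Fin.ext hji1
          rw [hj]; exact hmatch.2
        · exact (Prod.mk.injEq _ _ _ _ ▸ (hc j hji hji1)).2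
    · exact if_neg hc
end Sector
section Sector2
variable (N d : ℕ) (h0 h1 : Matrix (Fin d × Fin d) (Fin d × Fin d) ℂ)

def asl (Ψ : (Fin N → Fin d × Fin 2) → ℂ) (a : Fin N → Fin 2) : (Fin N → Fin d) → ℂ :=
  fun v => Ψ (pairF N d v a)

lemma K_bond_slice (i : ℕ) (hi : i + 1 < N) (Ψ : (Fin N → Fin d × Fin 2) → ℂ) :
    star Ψ ⬝ᵥ (twoSite N (Kterm d h0 h1) i hi).mulVec Ψ
      = ∑ a : Fin N → Fin 2,
          star (asl N d Ψ a) ⬝ᵥ (sectorB N d h0 h1 a i hi).mulVec (asl N d Ψ a) := by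
  classical
  simp only [quad_expand]
  rw [← Equiv.sum_comp (sectorEquiv N d)
    (fun x => ∑ y, star (Ψ x) * (twoSite N (Kterm d h0 h1) i hi x y * Ψ y))]
  rw [Fintype.sum_prod_type]
  rw [Finset.sum_comm]
  refine Finset.sum_congr rfl fun a _ => ?_
  refine Finset.sum_congr rfl fun v _ => ?_
  have hW : ∀ p : (Fin N → Fin d) × (Fin N → Fin 2),
      sectorEquiv N d p = pairF N d p.1 p.2 := fun _ => rfl
  rw [hW]
  rw [← Equiv.sum_comp (sectorEquiv N d)
    (fun y => star (Ψ (pairF N d v a)) * (twoSite N (Kterm d h0 h1) i hi (pairF N d v a) y * Ψ y))]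
  rw [Fintype.sum_prod_type]
  refine Finset.sum_congr rfl fun w _ => ?_
  rw [show (∑ b : Fin N → Fin 2, star (Ψ (pairF N d v a)) *
      (twoSite N (Kterm d h0 h1) i hi (pairF N d v a) (sectorEquiv N d (w, b))
        * Ψ (sectorEquiv N d (w, b))))
    = ∑ b : Fin N → Fin 2, star (Ψ (pairF N d v a)) *
      ((if a = b then sectorB N d h0 h1 a i hi v w else 0) * Ψ (pairF N d w b)) from
    Finset.sum_congr rfl fun b _ => by rw [hW, Kterm_twoSite_entry]]
  rw [Finset.sum_eq_single a]
  · rw [if_pos rfl]; rfl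
  · intro b _ hb
    rw [if_neg (fun hh => hb hh.symm), zero_mul, mul_zero]
  · intro hmem; exact absurd (Finset.mem_univ a) hmem

lemma K_norm (Ψ : (Fin N → Fin d × Fin 2) → ℂ) :
    ∑ x, ‖Ψ x‖ ^ 2 = ∑ a : Fin N → Fin 2, ∑ v : Fin N → Fin d, ‖asl N d Ψ a v‖ ^ 2 := by
  rw [← Equiv.sum_comp (sectorEquiv N d) (fun x => ‖Ψ x‖ ^ 2), Fintype.sum_prod_type,
    Finset.sum_comm]
  rfl

noncomputable def sBondE (a : Fin N → Fin 2) (z : (Fin N → Fin d) → ℂ) (i : ℕ) : ℝ :=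
  if hi : i + 1 < N then energyR (sectorB N d h0 h1 a i hi) z else 0

lemma K_energy [Nonempty (Fin d)] (Ψ : (Fin N → Fin d × Fin 2) → ℂ) :
    energyR (chainH N (Kterm d h0 h1)) Ψ
      = ∑ a : Fin N → Fin 2, ∑ i ∈ Finset.range (N - 1), sBondE N d h0 h1 a (asl N d Ψ a) i := by
  rw [chain_energy N (Kterm d h0 h1) Ψ]
  rw [Finset.sum_comm]
  refine Finset.sum_congr rfl fun i hil => ?_
  have hi : i + 1 < N := by
    have := Finset.mem_range.1 hil; omega
  rw [bondE_eq N (Kterm d h0 h1) Ψ i hi]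
  unfold energyR
  rw [K_bond_slice, Complex.re_sum]
  refine Finset.sum_congr rfl fun a _ => ?_
  rw [sBondE, dif_pos hi]
  rfl

lemma sBondE_run0 [Nonempty (Fin d)] (a : Fin N → Fin 2) (z : (Fin N → Fin d) → ℂ)
    (i : ℕ) (hi : i + 1 < N)
    (hj0 : a ⟨i, by omega⟩ = 0) (hj1 : a ⟨i + 1, hi⟩ = 0) :
    sBondE N d h0 h1 a z i = 1 / 3 * bondE N h0 z i := by
  rw [sBondE, dif_pos hi, bondE_eq _ _ _ _ hi]
  unfold sectorB
  rw [if_pos ⟨hj0, hj1⟩]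
  rw [show (1 / 3 : ℂ) = ((1 / 3 : ℝ) : ℂ) by norm_num, energyR_smul']

lemma sBondE_run1 [Nonempty (Fin d)] (a : Fin N → Fin 2) (z : (Fin N → Fin d) → ℂ)
    (i : ℕ) (hi : i + 1 < N)
    (hj0 : a ⟨i, by omega⟩ = 1) (hj1 : a ⟨i + 1, hi⟩ = 1) :
    sBondE N d h0 h1 a z i = 1 / 3 * bondE N h1 z i := by
  rw [sBondE, dif_pos hi, bondE_eq _ _ _ _ hi]
  unfold sectorB
  rw [if_neg (by rw [hj0]; exact fun hp => absurd hp.1 (by norm_num)), if_pos ⟨hj0, hj1⟩]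
  rw [show (1 / 3 : ℂ) = ((1 / 3 : ℝ) : ℂ) by norm_num, energyR_smul']

lemma sBondE_wall (a : Fin N → Fin 2) (z : (Fin N → Fin d) → ℂ) (i : ℕ) (hi : i + 1 < N)
    (hne : a ⟨i, by omega⟩ ≠ a ⟨i + 1, hi⟩) :
    sBondE N d h0 h1 a z i = ∑ v, ‖z v‖ ^ 2 := by
  rw [sBondE, dif_pos hi]
  unfold sectorB
  rw [if_neg (fun hp => hne (by rw [hp.1, hp.2])),
    if_neg (fun hp => hne (by rw [hp.1, hp.2])), energyR_one]
end Sector2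
noncomputable def RBv (M NR : ℝ) (ℓ : ℕ) : ℝ := (M * ℓ - ℓ - NR + 2) / (3 * NR)

lemma sum_split' (s t n : ℕ) (h1 : s < t) (h2 : t < n) (f : ℕ → ℝ) :
    ∑ i ∈ Finset.Ico s (n - 1), f i
      = (∑ i ∈ Finset.Ico s (t - 1), f i) + f (t - 1) + ∑ i ∈ Finset.Ico t (n - 1), f i := by
  have ha := Finset.sum_Ico_consecutive f (show s ≤ t - 1 by omega) (show t - 1 ≤ n - 1 by omega)
  have hb := Finset.sum_eq_sum_Ico_succ_bot (show t - 1 < n - 1 by omega) f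
  rw [← ha, hb, show t - 1 + 1 = t by omega]
  ring

section SectorBound
variable (N d : ℕ) (h0 h1 : Matrix (Fin d × Fin d) (Fin d × Fin d) ℂ)

lemma sector_bound [Nonempty (Fin d)] (hN : 2 ≤ N)
    (hop0 : opNorm h0 ≤ 1) (hop1 : opNorm h1 ≤ 1)
    (a : Fin N → Fin 2) (z : (Fin N → Fin d) → ℂ) :
    min (gE h0 N) (gE h1 N) / 3 * (∑ v, ‖z v‖ ^ 2)
      ≤ ∑ i ∈ Finset.range (N - 1), sBondE N d h0 h1 a z i := by
  classical
  set M := min (gE h0 N) (gE h1 N) with hM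
  set nrm := ∑ v, ‖z v‖ ^ 2 with hnrm
  have hnn : 0 ≤ nrm := Finset.sum_nonneg fun v _ => by positivity
  have hNR : (0 : ℝ) < (N : ℝ) := by positivity
  set aN : ℕ → Fin 2 := fun u => if hu : u < N then a ⟨u, hu⟩ else 0 with haNdef
  have haN : ∀ u (hu : u < N), aN u = a ⟨u, hu⟩ := fun u hu => dif_pos hu
  have fin2 : ∀ x : Fin 2, x ≠ 0 → x = 1 := by decide
  -- bound for a constant run [s, t)
  have run_piece : ∀ (h : Matrix (Fin d × Fin d) (Fin d × Fin d) ℂ), opNorm h ≤ 1 →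
      ∀ s t : ℕ, s < t → t ≤ N →
      (∀ i, s ≤ i → i + 1 < t → sBondE N d h0 h1 a z i = 1 / 3 * bondE N h z i) →
      gE h (t - s) / 3 * nrm ≤ ∑ i ∈ Finset.Ico s (t - 1), sBondE N d h0 h1 a z i := by
    intro h hop s t hst htN hbond
    have hsum : ∑ i ∈ Finset.Ico s (t - 1), sBondE N d h0 h1 a z i
        = 1 / 3 * ∑ i ∈ Finset.Ico s (t - 1), bondE N h z i := by
      rw [Finset.mul_sum]
      refine Finset.sum_congr rfl fun i hmem => ?_
      have hm := Finset.mem_Ico.1 hmem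
      exact hbond i hm.1 (by omega)
    rw [hsum]
    have h2 := run_bound_Ico N s (t - s) (by omega) h z
    rw [show s + (t - s) - 1 = t - 1 by omega] at h2
    nlinarith [h2]
  have hRB : ∀ (h : Matrix (Fin d × Fin d) (Fin d × Fin d) ℂ), opNorm h ≤ 1 → M ≤ gE h N →
      ∀ ℓ : ℕ, 1 ≤ ℓ → RBv M N ℓ ≤ gE h ℓ / 3 := by
    intro h hop hge ℓ hℓ
    have hle := gE_lower h hop N ℓ (by omega) hℓ
    have hle2 := (div_le_iff₀ hNR).1 hle
    have hcast : (0 : ℝ) ≤ (ℓ : ℝ) := Nat.cast_nonneg ℓ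
    have hMl : M * (ℓ : ℝ) ≤ gE h N * (ℓ : ℝ) := mul_le_mul_of_nonneg_right hge hcast
    unfold RBv
    rw [div_le_div_iff₀ (by positivity) (by norm_num : (0 : ℝ) < 3)]
    nlinarith [hle2, hMl]
  have RB_split : ∀ L1 L2 : ℕ,
      RBv M N L1 + RBv M N L2 + 1 = RBv M N (L1 + L2) + (2 * N + 2) / (3 * N) := by
    intro L1 L2
    unfold RBv
    push_cast
    field_simp
    ring
  -- constant-run bound with RBv (for runs inside the chain)
  have run_between : ∀ s t : ℕ, s < t → t ≤ N →
      (∀ u, s ≤ u → u < t → aN u = aN s) →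
      RBv M N (t - s) * nrm ≤ ∑ i ∈ Finset.Ico s (t - 1), sBondE N d h0 h1 a z i := by
    intro s t hst htN hcc
    by_cases hj : aN s = 0
    · have hb : ∀ i, s ≤ i → i + 1 < t → sBondE N d h0 h1 a z i = 1 / 3 * bondE N h0 z i := by
        intro i hi1 hi2
        exact sBondE_run0 N d h0 h1 a z i (by omega)
          (((haN i (by omega)).symm).trans ((hcc i hi1 (by omega)).trans hj))
          (((haN (i+1) (by omega)).symm).trans ((hcc (i+1) (by omega) (by omega)).trans hj))
      refine le_trans ?_ (run_piece h0 hop0 s t hst htN hb)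
      have := hRB h0 hop0 (min_le_left _ _) (t - s) (by omega)
      nlinarith [this]
    · have hj1 : aN s = 1 := fin2 _ hj
      have hb : ∀ i, s ≤ i → i + 1 < t → sBondE N d h0 h1 a z i = 1 / 3 * bondE N h1 z i := by
        intro i hi1 hi2
        exact sBondE_run1 N d h0 h1 a z i (by omega)
          (((haN i (by omega)).symm).trans ((hcc i hi1 (by omega)).trans hj1))
          (((haN (i+1) (by omega)).symm).trans ((hcc (i+1) (by omega) (by omega)).trans hj1))
      refine le_trans ?_ (run_piece h1 hop1 s t hst htN hb)
      have := hRB h1 hop1 (min_le_right _ _) (t - s) (by omega)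
      nlinarith [this]
  -- wall bond value
  have wall_val : ∀ t : ℕ, 1 ≤ t → t < N → aN (t - 1) ≠ aN t →
      sBondE N d h0 h1 a z (t - 1) = nrm := by
    intro t ht1 htN hne
    refine sBondE_wall N d h0 h1 a z (t - 1) (by omega) ?_
    rw [← haN (t - 1) (by omega)]
    intro hcon
    apply hne
    rw [hcon, haN t htN]
    congr 1
    exact Fin.ext (by simp only [Fin.val_mk]; omega)
  -- the main induction
  have S1 : ∀ L : ℕ, ∀ s, s + L = N → 1 ≤ L →
      RBv M N L * nrm ≤ ∑ i ∈ Finset.Ico s (N - 1), sBondE N d h0 h1 a z i := by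
    intro L
    induction L using Nat.strong_induction_on with
    | _ L ih =>
      intro s hsL hL1
      by_cases hconst : ∀ u, s ≤ u → u < N → aN u = aN s
      · have := run_between s N (by omega) (le_refl N) hconst
        rw [show N - s = L by omega] at this
        exact this
      · push_neg at hconst
        obtain ⟨u₀, hu1, hu2, hu3⟩ := hconst
        have hPu : ∃ u, s < u ∧ u < N ∧ aN u ≠ aN s :=
          ⟨u₀, lt_of_le_of_ne hu1 (fun hh => hu3 (by rw [← hh])), hu2, hu3⟩
        set t := Nat.find hPu with htdef
        obtain ⟨htg, htN, htne⟩ := Nat.find_spec hPu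
        have hmin : ∀ u, u < t → ¬(s < u ∧ u < N ∧ aN u ≠ aN s) :=
          fun u hu => Nat.find_min hPu hu
        have hcc : ∀ u, s ≤ u → u < t → aN u = aN s := by
          intro u h1 h2
          rcases eq_or_lt_of_le h1 with he | hlt
          · rw [← he]
          · by_contra hne
            exact hmin u h2 ⟨hlt, by omega, hne⟩
        have hrun := run_between s t htg (by omega) hcc
        have hwall : sBondE N d h0 h1 a z (t - 1) = nrm := by
          refine wall_val t (by omega) htN ?_
          rw [hcc (t - 1) (by omega) (by omega)]
          exact fun hh => htne hh.symm
        have htail := ih (N - t) (by omega) t (by omega) (by omega)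
        rw [sum_split' s t N htg htN _]
        have harith := RB_split (t - s) (N - t)
        rw [show t - s + (N - t) = L by omega] at harith
        have hw : (0 : ℝ) ≤ (2 * N + 2) / (3 * N) := by positivity
        nlinarith [hrun, htail, mul_le_mul_of_nonneg_right hw hnn]
  -- final assembly
  by_cases hconst : ∀ u, 0 ≤ u → u < N → aN u = aN 0
  · -- single sector: direct bound via gE h N ≥ M
    rw [Finset.range_eq_Ico]
    rw [show (0 : ℕ) = 0 by rfl]
    by_cases hj : aN 0 = 0
    · have hb : ∀ i, 0 ≤ i → i + 1 < N → sBondE N d h0 h1 a z i = 1 / 3 * bondE N h0 z i := by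
        intro i hi1 hi2
        exact sBondE_run0 N d h0 h1 a z i (by omega)
          (((haN i (by omega)).symm).trans ((hconst i (by omega) (by omega)).trans hj))
          (((haN (i+1) (by omega)).symm).trans ((hconst (i+1) (by omega) (by omega)).trans hj))
      have := run_piece h0 hop0 0 N (by omega) (le_refl N) hb
      have hge : M ≤ gE h0 (N - 0) := min_le_left _ _
      nlinarith [this, hge]
    · have hj1 : aN 0 = 1 := fin2 _ hj
      have hb : ∀ i, 0 ≤ i → i + 1 < N → sBondE N d h0 h1 a z i = 1 / 3 * bondE N h1 z i := by
        intro i hi1 hi2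
        exact sBondE_run1 N d h0 h1 a z i (by omega)
          (((haN i (by omega)).symm).trans ((hconst i (by omega) (by omega)).trans hj1))
          (((haN (i+1) (by omega)).symm).trans ((hconst (i+1) (by omega) (by omega)).trans hj1))
      have := run_piece h1 hop1 0 N (by omega) (le_refl N) hb
      have hge : M ≤ gE h1 (N - 0) := min_le_right _ _
      nlinarith [this, hge]
  · push_neg at hconst
    obtain ⟨u₀, _, hu2, hu3⟩ := hconst
    have hPu : ∃ u, 0 < u ∧ u < N ∧ aN u ≠ aN 0 :=
      ⟨u₀, Nat.pos_of_ne_zero (fun hh => hu3 (by rw [hh])), hu2, hu3⟩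
    set t := Nat.find hPu with htdef
    obtain ⟨htg, htN, htne⟩ := Nat.find_spec hPu
    have hmin : ∀ u, u < t → ¬(0 < u ∧ u < N ∧ aN u ≠ aN 0) :=
      fun u hu => Nat.find_min hPu hu
    have hcc : ∀ u, 0 ≤ u → u < t → aN u = aN 0 := by
      intro u h1 h2
      rcases Nat.eq_zero_or_pos u with he | hlt
      · rw [he]
      · by_contra hne
        exact hmin u h2 ⟨hlt, by omega, hne⟩
    have hrun := run_between 0 t htg (by omega) hcc
    have hwall : sBondE N d h0 h1 a z (t - 1) = nrm := by
      refine wall_val t (by omega) htN ?_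
      rw [hcc (t - 1) (by omega) (by omega)]
      exact fun hh => htne hh.symm
    have htail := S1 (N - t) t (by omega) (by omega)
    rw [Finset.range_eq_Ico, sum_split' 0 t N htg htN _]
    have harith := RB_split (t - 0) (N - t)
    rw [show t - 0 + (N - t) = N by omega] at harith
    have hfin : RBv M N N + (2 * N - 2) / (3 * N) = M / 3 := by
      unfold RBv
      field_simp
      ring
    have hw2 : (2 * (N : ℝ) - 2) / (3 * (N : ℝ)) ≤ (2 * (N : ℝ) + 2) / (3 * (N : ℝ)) :=
      (div_le_div_iff_of_pos_right (by positivity)).2 (by linarith)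
    nlinarith [hrun, htail, hw2]
end SectorBound
lemma energyR_zero_vec {n : Type*} [Fintype n] (H : Matrix n n ℂ) :
    energyR H (fun _ => 0) = 0 := by
  unfold energyR dotProduct
  simp

/-- The ground state energy of the combined Hamiltonian `K` equals `(1/3)·min_j E₀^{(j)}`. -/
theorem ground_energy_of_K (N d : ℕ) (hN : 2 ≤ N)
    (h0 h1 : Matrix (Fin d × Fin d) (Fin d × Fin d) ℂ)
    (hherm0 : h0.IsHermitian) (hherm1 : h1.IsHermitian)
    (hnorm0 : opNorm h0 ≤ 1) (hnorm1 : opNorm h1 ≤ 1)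
    (E0 E1 : ℝ)
    (hE0 : IsLeast {r : ℝ | ∃ φ : (Fin N → Fin d) → ℂ,
      (∑ x, ‖φ x‖ ^ 2) = 1 ∧ r = energyR (chainH N h0) φ} E0)
    (hE1 : IsLeast {r : ℝ | ∃ φ : (Fin N → Fin d) → ℂ,
      (∑ x, ‖φ x‖ ^ 2) = 1 ∧ r = energyR (chainH N h1) φ} E1)
    (hUniq0 : ∀ φ φ' : (Fin N → Fin d) → ℂ,
      (∑ x, ‖φ x‖ ^ 2) = 1 → (∑ x, ‖φ' x‖ ^ 2) = 1 →
      energyR (chainH N h0) φ = E0 → energyR (chainH N h0) φ' = E0 →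
      ∃ c : ℂ, φ' = c • φ)
    (hUniq1 : ∀ φ φ' : (Fin N → Fin d) → ℂ,
      (∑ x, ‖φ x‖ ^ 2) = 1 → (∑ x, ‖φ' x‖ ^ 2) = 1 →
      energyR (chainH N h1) φ = E1 → energyR (chainH N h1) φ' = E1 →
      ∃ c : ℂ, φ' = c • φ) :
    IsLeast {r : ℝ | ∃ φ : (Fin N → Fin d × Fin 2) → ℂ,
      (∑ x, ‖φ x‖ ^ 2) = 1 ∧ r = energyR (chainH N (Kterm d h0 h1)) φ}
      ((1 / 3) * min E0 E1) := by
  classical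
  -- d must be positive
  have hd : d ≠ 0 := by
    rintro rfl
    obtain ⟨φ, hφ, _⟩ := hE0.1
    haveI : IsEmpty (Fin N → Fin 0) := by
      refine ⟨fun f => ?_⟩
      exact (f ⟨0, by omega⟩).elim0
    rw [Finset.univ_eq_empty, Finset.sum_empty] at hφ
    norm_num at hφ
  haveI : Nonempty (Fin d) := ⟨⟨0, by omega⟩⟩
  -- identify ground energies
  have hE0g : E0 = gE h0 N := hE0.unique (gE_isLeast h0 N)
  have hE1g : E1 = gE h1 N := hE1.unique (gE_isLeast h1 N)
  constructor
  · -- membership : construct a witness state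
    rcases le_total E0 E1 with hle | hle
    · rw [min_eq_left hle]
      obtain ⟨φ₀, hφn, hφE⟩ := hE0.1
      set a₀ : Fin N → Fin 2 := fun _ => 0 with ha₀
      set Ψ : (Fin N → Fin d × Fin 2) → ℂ :=
        fun x => if (fun j => (x j).2) = a₀ then φ₀ (fun j => (x j).1) else 0 with hΨ
      have hasl : ∀ b, asl N d Ψ b = fun v => if b = a₀ then φ₀ v else 0 := by
        intro b
        funext v
        show (if (fun j => (pairF N d v b j).2) = a₀ then φ₀ (fun j => (pairF N d v b j).1) else 0)
          = _
        rfl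
      have hnormΨ : (∑ x, ‖Ψ x‖ ^ 2) = 1 := by
        rw [K_norm N d Ψ]
        rw [Finset.sum_eq_single a₀]
        · rw [hasl a₀]
          simp only [if_pos rfl]
          exact hφn
        · intro b _ hb
          rw [hasl b]
          simp only [if_neg hb]
          simp
        · intro hmem; exact absurd (Finset.mem_univ a₀) hmem
      refine ⟨Ψ, hnormΨ, ?_⟩
      rw [K_energy N d h0 h1 Ψ]
      rw [Finset.sum_eq_single a₀]
      · have hbond : ∀ i ∈ Finset.range (N - 1),
            sBondE N d h0 h1 a₀ (asl N d Ψ a₀) i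
              = 1 / 3 * bondE N h0 (asl N d Ψ a₀) i := by
          intro i hi
          have him := Finset.mem_range.1 hi
          exact sBondE_run0 N d h0 h1 a₀ (asl N d Ψ a₀) i (by omega) rfl rfl
        rw [Finset.sum_congr rfl hbond, ← Finset.mul_sum, ← chain_energy]
        have : asl N d Ψ a₀ = φ₀ := by
          rw [hasl a₀]
          funext v
          rw [if_pos rfl]
        rw [this, ← hφE]
      · intro b _ hb
        have hz : asl N d Ψ b = fun _ => 0 := by
          rw [hasl b]
          funext v
          rw [if_neg hb]
        rw [hz]
        refine Finset.sum_eq_zero fun i _ => ?_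
        unfold sBondE
        split
        · exact energyR_zero_vec _
        · rfl
      · intro hmem; exact absurd (Finset.mem_univ a₀) hmem
    · rw [min_eq_right hle]
      obtain ⟨φ₀, hφn, hφE⟩ := hE1.1
      set a₀ : Fin N → Fin 2 := fun _ => 1 with ha₀
      set Ψ : (Fin N → Fin d × Fin 2) → ℂ :=
        fun x => if (fun j => (x j).2) = a₀ then φ₀ (fun j => (x j).1) else 0 with hΨ
      have hasl : ∀ b, asl N d Ψ b = fun v => if b = a₀ then φ₀ v else 0 := by
        intro b
        funext v
        show (if (fun j => (pairF N d v b j).2) = a₀ then φ₀ (fun j => (pairF N d v b j).1) else 0)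
          = _
        rfl
      have hnormΨ : (∑ x, ‖Ψ x‖ ^ 2) = 1 := by
        rw [K_norm N d Ψ]
        rw [Finset.sum_eq_single a₀]
        · rw [hasl a₀]
          simp only [if_pos rfl]
          exact hφn
        · intro b _ hb
          rw [hasl b]
          simp only [if_neg hb]
          simp
        · intro hmem; exact absurd (Finset.mem_univ a₀) hmem
      refine ⟨Ψ, hnormΨ, ?_⟩
      rw [K_energy N d h0 h1 Ψ]
      rw [Finset.sum_eq_single a₀]
      · have hbond : ∀ i ∈ Finset.range (N - 1),
            sBondE N d h0 h1 a₀ (asl N d Ψ a₀) i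
              = 1 / 3 * bondE N h1 (asl N d Ψ a₀) i := by
          intro i hi
          have him := Finset.mem_range.1 hi
          exact sBondE_run1 N d h0 h1 a₀ (asl N d Ψ a₀) i (by omega) rfl rfl
        rw [Finset.sum_congr rfl hbond, ← Finset.mul_sum, ← chain_energy]
        have : asl N d Ψ a₀ = φ₀ := by
          rw [hasl a₀]
          funext v
          rw [if_pos rfl]
        rw [this, ← hφE]
      · intro b _ hb
        have hz : asl N d Ψ b = fun _ => 0 := by
          rw [hasl b]
          funext v
          rw [if_neg hb]
        rw [hz]
        refine Finset.sum_eq_zero fun i _ => ?_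
        unfold sBondE
        split
        · exact energyR_zero_vec _
        · rfl
      · intro hmem; exact absurd (Finset.mem_univ a₀) hmem
  · -- lower bound
    rintro r ⟨Ψ, hΨn, rfl⟩
    rw [K_energy N d h0 h1 Ψ]
    have hsec : ∀ a : Fin N → Fin 2,
        min (gE h0 N) (gE h1 N) / 3 * (∑ v, ‖asl N d Ψ a v‖ ^ 2)
          ≤ ∑ i ∈ Finset.range (N - 1), sBondE N d h0 h1 a (asl N d Ψ a) i :=
      fun a => sector_bound N d h0 h1 hN hnorm0 hnorm1 a (asl N d Ψ a)
    calc (1 / 3) * min E0 E1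
        = min (gE h0 N) (gE h1 N) / 3 * ∑ a : Fin N → Fin 2, ∑ v, ‖asl N d Ψ a v‖ ^ 2 := by
          rw [← K_norm N d Ψ, hΨn, mul_one, hE0g, hE1g]
          ring
      _ = ∑ a : Fin N → Fin 2, min (gE h0 N) (gE h1 N) / 3 * ∑ v, ‖asl N d Ψ a v‖ ^ 2 := by
          rw [Finset.mul_sum]
      _ ≤ ∑ a : Fin N → Fin 2, ∑ i ∈ Finset.range (N - 1), sBondE N d h0 h1 a (asl N d Ψ a) i :=
          Finset.sum_le_sum fun a _ => hsec a
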